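/- Let T = {t_n} and μ = Σ_n μ_n δ_{t_n} be such that Σ_n |t_n|^{2k} μ_n < ∞ for every integer k ≥ 0. Let {d_n} be a sequence with Σ_n |d_n|² μ_n < ∞, set f(z) = Σ_n d_n μ_n/(z − t_n), and let K be the smallest nonnegative integer with c := Σ_n d_n t_n^K μ_n ≠ 0 (assuming such K exists). Then for every M > 0, z^{K+1} f(z) → c as |z| → ∞ subject to dist(z, T) ≥ |z|^{−M}; that is, for every ε > 0 there is R > 0 such that |z^{K+1} f(z) − c| < ε whenever |z| > R and |z − t_n| ≥ |z|^{−M} for all n. -/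

import Mathlib

open Filter MeasureTheory

noncomputable section

/-- An entire function is of zero exponential type. -/
def ZeroExpType (F : ℂ → ℂ) : Prop :=
  ∀ ε : ℝ, 0 < ε → ∃ C : ℝ, ∀ z : ℂ, ‖F z‖ ≤ C * Real.exp (ε * ‖z‖)

def IsPolynomialFun (F : ℂ → ℂ) : Prop := ∃ P : Polynomial ℂ, F = fun z => P.eval z

/-- The Hamburger class: entire, zero exponential type, not a polynomial, real on `ℝ`,
only real simple zeros `s`, and `|s|^M = o(|B'(s)|)` for every `M > 0`. -/
def HamburgerClass (B : ℂ → ℂ) : Prop :=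
  Differentiable ℂ B ∧ ZeroExpType B ∧ ¬ IsPolynomialFun B ∧
  (∀ x : ℝ, (B (x : ℂ)).im = 0) ∧
  (∀ z : ℂ, B z = 0 → z.im = 0 ∧ deriv B z ≠ 0) ∧
  (∀ M : ℝ, 0 < M → ∀ ε : ℝ, 0 < ε → ∃ R : ℝ, ∀ z : ℂ, B z = 0 → R < ‖z‖ →
    ‖z‖ ^ M ≤ ε * ‖deriv B z‖)

def Estar (E : ℂ → ℂ) : ℂ → ℂ := fun z => starRingEnd ℂ (E (starRingEnd ℂ z))

/-- Hermite–Biehler class: entire, no real zeros, `|E*| < |E|` in the upper half-plane. -/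
def HermiteBiehler (E : ℂ → ℂ) : Prop :=
  Differentiable ℂ E ∧ (∀ x : ℝ, E (x : ℂ) ≠ 0) ∧
  ∀ z : ℂ, 0 < z.im → ‖Estar E z‖ < ‖E z‖

def AOf (E : ℂ → ℂ) : ℂ → ℂ := fun z => (E z + Estar E z) / 2

/-- The data of a two-sided strictly increasing sequence `T = {t n}` of distinct nonzero
reals with `|t n| → ∞` and a positive measure `μ = Σ μ_n δ_{t n}` with
`Σ μ_n/(1+t_n²) < ∞`. -/
structure CauchyData : Type where
  t : ℤ → ℝ
  mu : ℤ → ℝ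
  t_ne_zero : ∀ n, t n ≠ 0
  t_strictMono : StrictMono t
  t_tendsto : Filter.Tendsto (fun n => |t n|) Filter.cofinite Filter.atTop
  mu_pos : ∀ n, 0 < mu n
  mu_summable : Summable fun n => mu n / (1 + t n ^ 2)

namespace CauchyData

variable (d : CauchyData)

/-- `T` is power separated: `|t_{n+1} - t_n| ≥ C |t_n|^(-N)`. -/
def PowerSeparated : Prop :=
  ∃ C : ℝ, 0 < C ∧ ∃ N : ℕ, ∀ n : ℤ, C * |d.t n| ^ (-(N : ℝ)) ≤ |d.t (n + 1) - d.t n|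

def InT (z : ℂ) : Prop := ∃ n : ℤ, z = (d.t n : ℂ)

/-- The Cauchy transform `f(z) = Σ a_n μ_n^{1/2} / (z - t_n)`; membership of `f` in
`H(T,μ)` corresponds to `a ∈ ℓ²`. -/
def transform (a : ℤ → ℂ) : ℂ → ℂ :=
  fun z => ∑' n : ℤ, a n * (Real.sqrt (d.mu n) : ℂ) / (z - (d.t n : ℂ))

/-- The (modified) zero set `Z_f = {w ∉ T : f(w) = 0} ∪ {t_n : a_n = 0}`. -/
def zeroSet (a : ℤ → ℂ) : Set ℂ :=
  {w : ℂ | ¬ d.InT w ∧ d.transform a w = 0} ∪ {w : ℂ | ∃ n : ℤ, w = (d.t n : ℂ) ∧ a n = 0}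

/-- Multiple zeros of `f`: points `w ∈ ℂ∖T` with `f(w) = f'(w) = 0`. -/
def multipleZeros (a : ℤ → ℂ) : Set ℂ :=
  {w : ℂ | ¬ d.InT w ∧ d.transform a w = 0 ∧ deriv (d.transform a) w = 0}

/-- Localization property: no nonzero `f ∈ H(T,μ)` has infinitely many multiple zeros. -/
def HasLocalization : Prop :=
  ∀ a : ℤ → ℂ, Summable (fun n => ‖a n‖ ^ 2) → a ≠ 0 → (d.multipleZeros a).Finite

def DisjointBalls (r : ℤ → ℝ) : Prop :=
  Pairwise fun m n : ℤ => Disjoint (Metric.ball ((d.t m : ℂ)) (r m)) (Metric.ball ((d.t n : ℂ)) (r n))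

/-- Strong localization: pairwise disjoint disks `D(t_n, r_n)` such that for every
nonzero `f`, all but finitely many disks contain exactly one point of `Z_f`. -/
def HasStrongLocalization : Prop :=
  ∃ r : ℤ → ℝ, (∀ n, 0 < r n) ∧ d.DisjointBalls r ∧
    ∀ a : ℤ → ℂ, Summable (fun n => ‖a n‖ ^ 2) → a ≠ 0 →
      {n : ℤ | ¬ ∃! w : ℂ, w ∈ d.zeroSet a ∩ Metric.ball ((d.t n : ℂ)) (r n)}.Finite

/-- `S ⊆ T` is an attraction set for (the function with coefficients) `a`. -/
def IsAttractionSet (a : ℤ → ℂ) (S : Set ℤ) : Prop :=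
  ∃ r : ℤ → ℝ, (∀ n, 0 < r n) ∧ d.DisjointBalls r ∧
    (d.zeroSet a \ ⋃ n : ℤ, Metric.ball ((d.t n : ℂ)) (r n)).Finite ∧
    {n : ℤ | n ∈ S ∧ ¬ ∃! w : ℂ, w ∈ d.zeroSet a ∩ Metric.ball ((d.t n : ℂ)) (r n)}.Finite ∧
    {n : ℤ | n ∉ S ∧ ∃ w : ℂ, w ∈ d.zeroSet a ∩ Metric.ball ((d.t n : ℂ)) (r n)}.Finite

/-- The polynomials belong to `ℓ²(μ)`. -/
def PolysBelong : Prop :=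
  ∀ P : Polynomial ℂ, Summable fun n : ℤ => ‖P.eval ((d.t n : ℂ))‖ ^ 2 * d.mu n

/-- The polynomials are dense in `ℓ²(μ)`. -/
def PolysDense : Prop :=
  ∀ c : ℤ → ℂ, Summable (fun n => ‖c n‖ ^ 2 * d.mu n) → ∀ ε : ℝ, 0 < ε →
    ∃ P : Polynomial ℂ, (∑' n : ℤ, ‖c n - P.eval ((d.t n : ℂ))‖ ^ 2 * d.mu n) < ε

/-- There is a chain `W_1 ⊆ ... ⊆ W_N` of subsets of `T` with infinite successive
differences such that the attraction set of every nonzero `f` is one of the `W_j`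
up to a finite set. -/
def LocChain (N : ℕ) : Prop :=
  d.HasLocalization ∧
  ∃ W : ℕ → Set ℤ,
    (∀ j : ℕ, 1 ≤ j → j < N → W j ⊆ W (j + 1)) ∧
    (∀ j : ℕ, 1 ≤ j → j < N → (W (j + 1) \ W j).Infinite) ∧
    (∀ a : ℤ → ℂ, Summable (fun n => ‖a n‖ ^ 2) → a ≠ 0 →
      ∃ S : Set ℤ, d.IsAttractionSet a S ∧ ∃ j : ℕ, 1 ≤ j ∧ j ≤ N ∧ (symmDiff S (W j)).Finite)

/-- Localization property of type `N`: `N` is the smallest length of such a chain. -/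
def HasLocType (N : ℕ) : Prop := d.LocChain N ∧ ∀ N' : ℕ, N' < N → ¬ d.LocChain N'

end CauchyData

/-- The polynomials belong to the weighted `ℓ²` space over `S` with weight `w`. -/
def polysBelongOn (t : ℤ → ℝ) (S : Set ℤ) (w : ℤ → ℝ) : Prop :=
  ∀ P : Polynomial ℂ, Summable fun n : S => ‖P.eval ((t n.1 : ℂ))‖ ^ 2 * w n.1

/-- The polynomials are dense in the weighted `ℓ²` space over `S` with weight `w`. -/
def polysDenseOn (t : ℤ → ℝ) (S : Set ℤ) (w : ℤ → ℝ) : Prop :=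
  ∀ c : S → ℂ, Summable (fun n => ‖c n‖ ^ 2 * w n.1) → ∀ ε : ℝ, 0 < ε →
    ∃ P : Polynomial ℂ, (∑' n : S, ‖c n - P.eval ((t n.1 : ℂ))‖ ^ 2 * w n.1) < ε

/-- The closed linear span of the polynomials has finite codimension in the weighted
`ℓ²` space over `S`: adding finitely many vectors makes the span dense. -/
def polysFiniteCodimOn (t : ℤ → ℝ) (S : Set ℤ) (w : ℤ → ℝ) : Prop :=
  ∃ (m : ℕ) (v : Fin m → (S → ℂ)),
    (∀ i, Summable fun n => ‖v i n‖ ^ 2 * w n.1) ∧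
    ∀ c : S → ℂ, Summable (fun n => ‖c n‖ ^ 2 * w n.1) → ∀ ε : ℝ, 0 < ε →
      ∃ (P : Polynomial ℂ) (β : Fin m → ℂ),
        (∑' n : S, ‖c n - (P.eval ((t n.1 : ℂ)) + ∑ i, β i * v i n)‖ ^ 2 * w n.1) < ε

/-- If all moments of `μ` are finite, `{d_n} ∈ ℓ²(μ)`,
`f(z) = Σ d_n μ_n/(z - t_n)` and `K` is the smallest nonnegative integer with
`c = Σ d_n t_n^K μ_n ≠ 0`, then `z^{K+1} f(z) → c` as `|z| → ∞` subject to
`dist(z,T) ≥ |z|^{-M}`. -/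
theorem stmt_6 (d : CauchyData)
    (hmom : ∀ k : ℕ, Summable fun n : ℤ => |d.t n| ^ k * d.mu n)
    (a : ℤ → ℂ) (ha : Summable fun n : ℤ => ‖a n‖ ^ 2 * d.mu n)
    (hsum : ∀ k : ℕ, Summable fun n : ℤ => a n * ((d.t n : ℂ)) ^ k * (d.mu n : ℂ))
    (K : ℕ)
    (hlow : ∀ j : ℕ, j < K → (∑' n : ℤ, a n * ((d.t n : ℂ)) ^ j * (d.mu n : ℂ)) = 0)
    (c : ℂ) (hc : c = ∑' n : ℤ, a n * ((d.t n : ℂ)) ^ K * (d.mu n : ℂ)) (hc0 : c ≠ 0)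
    (M : ℝ) (hM : 0 < M) :
    ∀ ε : ℝ, 0 < ε → ∃ R : ℝ, 0 < R ∧ ∀ z : ℂ, R < ‖z‖ →
      (∀ n : ℤ, ‖z‖ ^ (-M) ≤ ‖z - (d.t n : ℂ)‖) →
      ‖z ^ (K + 1) * (∑' n : ℤ, a n * (d.mu n : ℂ) / (z - (d.t n : ℂ))) - c‖ < ε := by

  intro eps heps
  -- L : a natural number with M + 1 ≤ L
  obtain ⟨L, hML⟩ : ∃ L : ℕ, M + 1 ≤ (L : ℝ) := by
    obtain ⟨L, hL⟩ := exists_nat_ge (M + 1)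
    exact ⟨L, hL⟩
  -- absolute summability of weighted sequences
  have hmu0 : ∀ n : ℤ, (0:ℝ) ≤ d.mu n := fun n => (d.mu_pos n).le
  have hterm0 : ∀ (k : ℕ) (n : ℤ), (0:ℝ) ≤ ‖a n‖ * |d.t n| ^ k * d.mu n :=
    fun k n => mul_nonneg (mul_nonneg (norm_nonneg _) (pow_nonneg (abs_nonneg _) _)) (hmu0 n)
  have habs : ∀ k : ℕ, Summable fun n : ℤ => ‖a n‖ * |d.t n| ^ k * d.mu n := by
    intro k
    refine Summable.of_nonneg_of_le (fun n => hterm0 k n) (fun n => ?_)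
      ((ha.add (hmom (2 * k))).div_const 2)
    · 
      have h2 : (0:ℝ) ≤ d.mu n := (d.mu_pos n).le
      have hrw : |d.t n| ^ (2 * k) = (|d.t n| ^ k) ^ 2 := by
        rw [← pow_mul, mul_comm]
      rw [hrw]
      nlinarith [mul_nonneg h2 (sq_nonneg (‖a n‖ - |d.t n| ^ k))]
  -- dominating sequence
  set g : ℤ → ℝ := fun n =>
    2 * (‖a n‖ * |d.t n| ^ (K+1) * d.mu n)
      + 2 ^ L * (‖a n‖ * |d.t n| ^ (K+1+L) * d.mu n) with hgdef
  have hg : Summable g := ((habs (K+1)).mul_left 2).add ((habs (K+1+L)).mul_left (2 ^ L))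
  set A : ℝ := ∑' n, g n with hAdef
  have hg0 : ∀ n : ℤ, 0 ≤ g n := fun n => add_nonneg
    (mul_nonneg (by norm_num) (hterm0 (K+1) n))
    (mul_nonneg (pow_nonneg (by norm_num) L) (hterm0 (K+1+L) n))
  have hA0 : 0 ≤ A := tsum_nonneg hg0
  refine ⟨max 1 (A / eps), lt_of_lt_of_le one_pos (le_max_left _ _), ?_⟩
  intro z hz hd
  have h1 : 1 < ‖z‖ := lt_of_le_of_lt (le_max_left _ _) hz
  have hz0 : (0:ℝ) < ‖z‖ := lt_trans one_pos h1
  have hne : ∀ n : ℤ, z - ((d.t n : ℝ) : ℂ) ≠ 0 := by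
    intro n
    have : (0:ℝ) < ‖z - ((d.t n : ℝ) : ℂ)‖ :=
      lt_of_lt_of_le (Real.rpow_pos_of_pos hz0 (-M)) (hd n)
    exact norm_pos_iff.mp this
  -- the per-term bound on the tail
  have hbound : ∀ n : ℤ,
      ‖a n * ((d.t n : ℝ) : ℂ) ^ (K+1) * ((d.mu n : ℝ) : ℂ) / (z - ((d.t n : ℝ):ℂ))‖
        ≤ g n / ‖z‖ := by
    intro n
    have hmu : (0:ℝ) < d.mu n := d.mu_pos n
    have hnorm : ‖a n * ((d.t n : ℝ) : ℂ) ^ (K+1) * ((d.mu n : ℝ) : ℂ) / (z - ((d.t n : ℝ):ℂ))‖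
        = ‖a n‖ * |d.t n| ^ (K+1) * d.mu n / ‖z - ((d.t n : ℝ):ℂ)‖ := by
      rw [norm_div, norm_mul, norm_mul, norm_pow, Complex.norm_real, Complex.norm_real,
        Real.norm_eq_abs, Real.norm_eq_abs, abs_of_pos hmu]
    rw [hnorm]
    rcases le_or_gt (2 * |d.t n|) ‖z‖ with hcase | hcase
    · -- |t| small: ‖z - t‖ ≥ ‖z‖/2
      have hzt : ‖z‖ / 2 ≤ ‖z - ((d.t n : ℝ):ℂ)‖ := by
        have := norm_sub_norm_le z (((d.t n : ℝ)):ℂ)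
        rw [Complex.norm_real, Real.norm_eq_abs] at this
        linarith
      have hX : (0:ℝ) ≤ ‖a n‖ * |d.t n| ^ (K+1) * d.mu n := hterm0 (K+1) n
      calc ‖a n‖ * |d.t n| ^ (K+1) * d.mu n / ‖z - ((d.t n : ℝ):ℂ)‖
          ≤ ‖a n‖ * |d.t n| ^ (K+1) * d.mu n / (‖z‖ / 2) := by
            apply div_le_div_of_nonneg_left hX (by linarith) hzt
        _ = 2 * (‖a n‖ * |d.t n| ^ (K+1) * d.mu n) / ‖z‖ := by
            rw [div_div_eq_mul_div, mul_comm (‖a n‖ * |d.t n| ^ (K+1) * d.mu n) 2]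
        _ ≤ g n / ‖z‖ := by
            apply div_le_div_of_nonneg_right ?_ hz0.le
            simp only [hgdef]
            have := mul_nonneg (pow_nonneg (by norm_num : (0:ℝ) ≤ 2) L) (hterm0 (K+1+L) n)
            linarith
    · -- |t| large: use separation hypothesis
      have hinv : ‖z - ((d.t n : ℝ):ℂ)‖⁻¹ ≤ ‖z‖ ^ M := by
        have h0 : (0:ℝ) < ‖z‖ ^ (-M) := Real.rpow_pos_of_pos hz0 (-M)
        have := inv_anti₀ h0 (hd n)
        rwa [← Real.rpow_neg hz0.le, neg_neg] at this
      have hMup : ‖z‖ ^ M * ‖z‖ ≤ (2 * |d.t n|) ^ L := by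
        have e1 : ‖z‖ ^ M * ‖z‖ = ‖z‖ ^ (M + 1) := by
          rw [Real.rpow_add hz0, Real.rpow_one]
        have e2 : ‖z‖ ^ (M + 1) ≤ ‖z‖ ^ ((L : ℝ)) :=
          Real.rpow_le_rpow_of_exponent_le h1.le hML
        have e3 : ‖z‖ ^ ((L : ℝ)) = ‖z‖ ^ L := by
          rw [Real.rpow_natCast]
        have e4 : ‖z‖ ^ L ≤ (2 * |d.t n|) ^ L :=
          pow_le_pow_left₀ hz0.le hcase.le L
        rw [e1]
        calc ‖z‖ ^ (M+1) ≤ ‖z‖ ^ ((L:ℝ)) := e2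
          _ = ‖z‖ ^ L := e3
          _ ≤ (2 * |d.t n|) ^ L := e4
      have hMdiv : ‖z‖ ^ M ≤ (2 * |d.t n|) ^ L / ‖z‖ := by
        rw [le_div_iff₀ hz0]; exact hMup
      have hX : (0:ℝ) ≤ ‖a n‖ * |d.t n| ^ (K+1) * d.mu n := hterm0 (K+1) n
      calc ‖a n‖ * |d.t n| ^ (K+1) * d.mu n / ‖z - ((d.t n : ℝ):ℂ)‖
          = ‖a n‖ * |d.t n| ^ (K+1) * d.mu n * ‖z - ((d.t n : ℝ):ℂ)‖⁻¹ := by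
            rw [div_eq_mul_inv]
        _ ≤ ‖a n‖ * |d.t n| ^ (K+1) * d.mu n * ((2 * |d.t n|) ^ L / ‖z‖) :=
            mul_le_mul_of_nonneg_left (le_trans hinv hMdiv) hX
        _ = 2 ^ L * (‖a n‖ * |d.t n| ^ (K+1+L) * d.mu n) / ‖z‖ := by
            rw [mul_pow, pow_add]; ring
        _ ≤ g n / ‖z‖ := by
            apply div_le_div_of_nonneg_right ?_ hz0.le
            simp only [hgdef]
            have := mul_nonneg (by norm_num : (0:ℝ) ≤ 2) (hterm0 (K+1) n)
            linarith
  -- summability of the pieces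
  have hStail : Summable fun n : ℤ =>
      a n * ((d.t n : ℝ) : ℂ) ^ (K+1) * ((d.mu n : ℝ) : ℂ) / (z - ((d.t n : ℝ):ℂ)) :=
    Summable.of_norm_bounded (hg.div_const ‖z‖) hbound
  have hSpoly : ∀ i : ℕ, Summable fun n : ℤ =>
      a n * ((d.t n : ℝ) : ℂ) ^ (K - i) * ((d.mu n : ℝ) : ℂ) * z ^ i :=
    fun i => (hsum (K - i)).mul_right (z ^ i)
  have hSsum : Summable fun n : ℤ =>
      ∑ i ∈ Finset.range (K+1), a n * ((d.t n : ℝ) : ℂ) ^ (K - i) * ((d.mu n : ℝ) : ℂ) * z ^ i :=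
    summable_sum (fun i _ => hSpoly i)
  -- the algebraic identity per term
  have hid : ∀ n : ℤ, z ^ (K+1) * (a n * ((d.mu n : ℝ) : ℂ) / (z - ((d.t n : ℝ):ℂ)))
      = (∑ i ∈ Finset.range (K+1), a n * ((d.t n : ℝ) : ℂ) ^ (K - i) * ((d.mu n : ℝ) : ℂ) * z ^ i)
        + a n * ((d.t n : ℝ) : ℂ) ^ (K+1) * ((d.mu n : ℝ) : ℂ) / (z - ((d.t n : ℝ):ℂ)) := by
    intro n
    have e1 := geom_sum₂_mul z (((d.t n : ℝ)):ℂ) (K+1)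
    have hsumeq : (∑ i ∈ Finset.range (K+1), z ^ i * ((d.t n : ℝ):ℂ) ^ (K + 1 - 1 - i))
        = ∑ i ∈ Finset.range (K+1), z ^ i * ((d.t n : ℝ):ℂ) ^ (K - i) := by
      apply Finset.sum_congr rfl
      intro i _
      congr 2
    rw [hsumeq] at e1
    have hne' := hne n
    have hfac : (∑ i ∈ Finset.range (K+1), a n * ((d.t n : ℝ) : ℂ) ^ (K - i) * ((d.mu n : ℝ) : ℂ) * z ^ i)
        = a n * ((d.mu n : ℝ) : ℂ) * ∑ i ∈ Finset.range (K+1), z ^ i * ((d.t n : ℝ):ℂ) ^ (K - i) := by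
      rw [Finset.mul_sum]
      exact Finset.sum_congr rfl (fun i _ => by ring)
    have e2 : z ^ (K+1) = (∑ i ∈ Finset.range (K+1), z ^ i * ((d.t n : ℝ):ℂ) ^ (K - i)) * (z - ((d.t n : ℝ):ℂ)) + ((d.t n : ℝ):ℂ) ^ (K+1) := by
      linear_combination -e1
    rw [hfac]
    calc z ^ (K+1) * (a n * ((d.mu n : ℝ) : ℂ) / (z - ((d.t n : ℝ):ℂ)))
        = a n * ((d.mu n : ℝ) : ℂ) * (∑ i ∈ Finset.range (K+1), z ^ i * ((d.t n : ℝ):ℂ) ^ (K - i))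
            * ((z - ((d.t n : ℝ):ℂ)) / (z - ((d.t n : ℝ):ℂ)))
          + a n * ((d.t n : ℝ) : ℂ) ^ (K+1) * ((d.mu n : ℝ) : ℂ) / (z - ((d.t n : ℝ):ℂ)) := by
          rw [e2]; ring
      _ = a n * ((d.mu n : ℝ) : ℂ) * (∑ i ∈ Finset.range (K+1), z ^ i * ((d.t n : ℝ):ℂ) ^ (K - i))
          + a n * ((d.t n : ℝ) : ℂ) ^ (K+1) * ((d.mu n : ℝ) : ℂ) / (z - ((d.t n : ℝ):ℂ)) := by
          rw [div_self hne', mul_one]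
  -- putting it together
  have key : z ^ (K+1) * (∑' n : ℤ, a n * ((d.mu n : ℝ) : ℂ) / (z - ((d.t n : ℝ):ℂ))) - c
      = ∑' n : ℤ, a n * ((d.t n : ℝ) : ℂ) ^ (K+1) * ((d.mu n : ℝ) : ℂ) / (z - ((d.t n : ℝ):ℂ)) := by
    have e0 : z ^ (K+1) * (∑' n : ℤ, a n * ((d.mu n : ℝ) : ℂ) / (z - ((d.t n : ℝ):ℂ)))
        = ∑' n : ℤ, z ^ (K+1) * (a n * ((d.mu n : ℝ) : ℂ) / (z - ((d.t n : ℝ):ℂ))) :=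
      (tsum_mul_left).symm
    rw [e0, tsum_congr hid, Summable.tsum_add hSsum hStail, Summable.tsum_finsetSum (fun i _ => hSpoly i)]
    have e2 : ∀ i ∈ Finset.range (K+1),
        (∑' n : ℤ, a n * ((d.t n : ℝ) : ℂ) ^ (K - i) * ((d.mu n : ℝ) : ℂ) * z ^ i)
        = (∑' n : ℤ, a n * ((d.t n : ℝ) : ℂ) ^ (K - i) * ((d.mu n : ℝ) : ℂ)) * z ^ i :=
      fun i _ => tsum_mul_right
    rw [Finset.sum_congr rfl e2]
    have e3 : (∑ i ∈ Finset.range (K+1),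
        (∑' n : ℤ, a n * ((d.t n : ℝ) : ℂ) ^ (K - i) * ((d.mu n : ℝ) : ℂ)) * z ^ i) = c := by
      rw [Finset.sum_eq_single 0]
      · simp [hc]
      · intro i hi hi0
        have : K - i < K := by
          have := Finset.mem_range.mp hi
          omega
        rw [hlow _ this, zero_mul]
      · intro h; simp at h
    rw [e3]; ring
  rw [key]
  -- final estimate
  have hnormsum : Summable fun n : ℤ =>
      ‖a n * ((d.t n : ℝ) : ℂ) ^ (K+1) * ((d.mu n : ℝ) : ℂ) / (z - ((d.t n : ℝ):ℂ))‖ :=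
    Summable.of_nonneg_of_le (fun n => norm_nonneg _) hbound (hg.div_const ‖z‖)
  calc ‖∑' n : ℤ, a n * ((d.t n : ℝ) : ℂ) ^ (K+1) * ((d.mu n : ℝ) : ℂ) / (z - ((d.t n : ℝ):ℂ))‖
      ≤ ∑' n : ℤ, ‖a n * ((d.t n : ℝ) : ℂ) ^ (K+1) * ((d.mu n : ℝ) : ℂ) / (z - ((d.t n : ℝ):ℂ))‖ :=
        norm_tsum_le_tsum_norm hnormsum
    _ ≤ ∑' n : ℤ, g n / ‖z‖ := Summable.tsum_le_tsum hbound hnormsum (hg.div_const ‖z‖)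
    _ = A / ‖z‖ := by rw [tsum_div_const]
    _ < eps := by
        rw [div_lt_iff₀ hz0]
        have : A / eps < ‖z‖ := lt_of_le_of_lt (le_max_right 1 (A/eps)) hz
        rw [div_lt_iff₀ heps] at this
        linarith
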